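/- Let α > 1 be irrational and S_α the set avoided by the partition {A_α, B_α}. If p ∈ S_α, then p is either the numerator of a convergent of α, twice the numerator of a convergent, or the numerator p_{n-1} + k·p_n (1 ≤ k < a_{n+1}) of an intermediate fraction of α. -/

import Mathlib

/-- `E α n` is the error `n - qα` where `qα` is the integer multiple of `α`
nearest to `n` (for `α > 1`, this multiple is `round (n/α) * α`). -/
noncomputable def E (α : ℝ) (n : ℕ) : ℝ := (n : ℝ) - round ((n : ℝ) / α) * α

/-- `A_α`: positive integers whose nearest multiple of `α` exceeds them. -/
def Aset (α : ℝ) : Set ℕ := {n | 0 < n ∧ E α n < 0}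

/-- `B_α`: positive integers whose nearest multiple of `α` is below them. -/
def Bset (α : ℝ) : Set ℕ := {n | 0 < n ∧ 0 < E α n}

/-- `S_α`: positive integers not expressible as a sum of two distinct elements
of `A_α` nor of two distinct elements of `B_α`. -/
def Sset (α : ℝ) : Set ℕ :=
  {s | 0 < s ∧ (∀ x ∈ Aset α, ∀ y ∈ Aset α, x ≠ y → x + y ≠ s) ∧
       (∀ x ∈ Bset α, ∀ y ∈ Bset α, x ≠ y → x + y ≠ s)}
/-- Data of the continued fraction expansion `α = [a 0; a 1, a 2, ...]` of an
irrational `α > 1`, with `t n` the successive complete quotients, and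
`p n / q n` the convergents. -/
structure CF (α : ℝ) where
  a : ℕ → ℕ
  t : ℕ → ℝ
  p : ℕ → ℕ
  q : ℕ → ℕ
  t0 : t 0 = α
  ha : ∀ n, 1 ≤ a n
  floor_t : ∀ n, (a n : ℝ) = ⌊t n⌋
  t_rec : ∀ n, t n = a n + 1 / t (n + 1)
  p0 : p 0 = a 0
  p1 : p 1 = a 1 * a 0 + 1
  p_rec : ∀ n, p (n + 2) = a (n + 2) * p (n + 1) + p n
  q0 : q 0 = 1
  q1 : q 1 = a 1
  q_rec : ∀ n, q (n + 2) = a (n + 2) * q (n + 1) + q n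

/-- The numerators extended by two initial terms: `P 0 = p_{-2} = 0`,
`P 1 = p_{-1} = 1`, and `P (n+2) = p n`. -/
def CF.P {α : ℝ} (c : CF α) : ℕ → ℕ
  | 0 => 0
  | 1 => 1
  | n + 2 => c.p n

namespace Stmt9Aux

variable {α : ℝ}

def G (c : CF α) : ℕ → ℕ
  | 0 => 1
  | 1 => 0
  | n + 2 => c.a n * G c (n + 1) + G c n

noncomputable def D (c : CF α) (m : ℕ) : ℝ := (c.P m : ℝ) * α⁻¹ - (G c m : ℝ)

noncomputable def Fr (α : ℝ) (x : ℕ) : ℝ := Int.fract ((x : ℝ) * α⁻¹)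

lemma P_rec (c : CF α) (m : ℕ) : c.P (m + 2) = c.a m * c.P (m + 1) + c.P m := by
  match m with
  | 0 => simp [CF.P, c.p0]
  | 1 => simp [CF.P, c.p1, c.p0]
  | n + 2 => simpa [CF.P] using c.p_rec n

lemma P_pos (c : CF α) : ∀ m, 0 < c.P (m + 1) := by
  intro m
  induction m using Nat.strong_induction_on with
  | _ m ih =>
    match m with
    | 0 => simp [CF.P]
    | 1 => simpa [CF.P, c.p0] using Nat.lt_of_succ_le (c.ha 0)
    | n + 2 =>
      have h1 := ih (n + 1) (by omega)
      have := c.ha (n + 2)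
      rw [P_rec c (n + 1)]
      exact Nat.add_pos_left (Nat.mul_pos (c.ha (n + 1)) h1) _

lemma P_mono (c : CF α) : ∀ m, c.P m ≤ c.P (m + 1) := by
  intro m
  match m with
  | 0 => simp [CF.P]
  | n + 1 =>
    rw [P_rec c n]
    have := c.ha n
    have := P_pos c n
    nlinarith [Nat.zero_le (c.P n)]

lemma t_facts (hα : 1 < α) (hirr : Irrational α) (c : CF α) :
    ∀ m, 1 < c.t m ∧ Irrational (c.t m) := by
  intro m
  induction m with
  | zero => rw [c.t0]; exact ⟨hα, hirr⟩
  | succ n ih =>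
    obtain ⟨h1, hir⟩ := ih
    have hfl : (c.a n : ℝ) = ⌊c.t n⌋ := c.floor_t n
    have hrec := c.t_rec n
    have hfr : 1 / c.t (n + 1) = Int.fract (c.t n) := by
      rw [Int.fract, ← hfl]; linarith
    have hirrfr : Irrational (Int.fract (c.t n)) := by
      rw [Int.fract]; exact hir.sub_intCast _
    have h0 : 0 < Int.fract (c.t n) := by
      rcases (Int.fract_nonneg (c.t n)).lt_or_eq with h | h
      · exact h
      · exfalso
        exact (h ▸ hirrfr) ⟨0, by simp⟩
    have h1' : Int.fract (c.t n) < 1 := Int.fract_lt_one _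
    have hne : c.t (n + 1) ≠ 0 := by
      intro h
      rw [h] at hfr; simp at hfr; linarith
    have heq : c.t (n + 1) = (Int.fract (c.t n))⁻¹ := by
      field_simp at hfr
      exact eq_inv_of_mul_eq_one_left hfr.symm
    constructor
    · rw [heq]; exact one_lt_inv_iff₀.mpr ⟨h0, h1'⟩
    · rw [heq]; exact hirrfr.inv

lemma D0 (c : CF α) : D c 0 = -1 := by simp [D, CF.P, G]

lemma D1 (c : CF α) : D c 1 = α⁻¹ := by simp [D, CF.P, G]

lemma D_rec (c : CF α) (m : ℕ) : D c (m + 2) = (c.a m : ℝ) * D c (m + 1) + D c m := by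
  unfold D
  rw [P_rec c m]
  show ((c.a m * c.P (m+1) + c.P m : ℕ) : ℝ) * α⁻¹ - ((c.a m * G c (m+1) + G c m : ℕ) : ℝ) = _
  push_cast
  ring

lemma D_succ (hα : 1 < α) (hirr : Irrational α) (c : CF α) :
    ∀ m, D c (m + 1) = -(D c m) / c.t m := by
  intro m
  induction m with
  | zero =>
    rw [D1, D0, c.t0]
    field_simp
  | succ n ih =>
    have ht := (t_facts hα hirr c n).1
    have ht2 := (t_facts hα hirr c (n + 1)).1
    have htne : c.t n ≠ 0 := by linarith
    have htne2 : c.t (n + 1) ≠ 0 := by linarith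
    have hDm : D c n = -(c.t n) * D c (n + 1) := by
      rw [ih]; field_simp
    have hrec := c.t_rec n
    have key : (c.a n : ℝ) - c.t n = -(1 / c.t (n + 1)) := by linarith
    rw [D_rec, hDm]
    calc (c.a n : ℝ) * D c (n + 1) + -(c.t n) * D c (n + 1)
        = ((c.a n : ℝ) - c.t n) * D c (n + 1) := by ring
      _ = -(1 / c.t (n + 1)) * D c (n + 1) := by rw [key]
      _ = -(D c (n + 1)) / c.t (n + 1) := by ring

lemma D_sign (hα : 1 < α) (hirr : Irrational α) (c : CF α) :
    ∀ m, 0 < (-1 : ℝ) ^ (m + 1) * D c m := by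
  intro m
  induction m with
  | zero => simp [D0]
  | succ n ih =>
    have ht := (t_facts hα hirr c n).1
    rw [D_succ hα hirr c n]
    have : (-1 : ℝ) ^ (n + 1 + 1) * (-(D c n) / c.t n)
        = ((-1 : ℝ) ^ (n + 1) * D c n) / c.t n := by ring
    rw [this]
    positivity

lemma D_ne (hα : 1 < α) (hirr : Irrational α) (c : CF α) (m : ℕ) : D c m ≠ 0 := by
  have := D_sign hα hirr c m
  intro h
  rw [h] at this
  simp at this

lemma D_pos_odd (hα : 1 < α) (hirr : Irrational α) (c : CF α) {m : ℕ} (hm : Odd m) :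
    0 < D c m := by
  have := D_sign hα hirr c m
  have he : Even (m + 1) := Odd.add_one hm
  rwa [he.neg_one_pow, one_mul] at this

lemma D_neg_even (hα : 1 < α) (hirr : Irrational α) (c : CF α) {m : ℕ} (hm : Even m) :
    D c m < 0 := by
  have := D_sign hα hirr c m
  have ho : Odd (m + 1) := Even.add_one hm
  rw [ho.neg_one_pow] at this
  linarith

lemma D_abs_lt (hα : 1 < α) (hirr : Irrational α) (c : CF α) (m : ℕ) :
    |D c (m + 1)| < |D c m| := by
  have ht := (t_facts hα hirr c m).1
  have hne := D_ne hα hirr c m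
  rw [D_succ hα hirr c m, abs_div, abs_neg]
  rw [abs_of_pos (by linarith : (0:ℝ) < c.t m)]
  rw [div_lt_iff₀ (by linarith)]
  nlinarith [abs_pos.mpr hne]

lemma D_abs_le (hα : 1 < α) (hirr : Irrational α) (c : CF α) :
    ∀ m, |D c (m + 1)| ≤ α⁻¹ := by
  intro m
  induction m with
  | zero => rw [D1, abs_of_pos (by positivity : (0:ℝ) < α⁻¹)]
  | succ n ih => exact le_of_lt (lt_of_lt_of_le (D_abs_lt hα hirr c (n + 1)) ih)

lemma det (hα : 1 < α) (hirr : Irrational α) (c : CF α) :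
    ∀ m, (c.P (m + 1) : ℝ) * D c m - (c.P m : ℝ) * D c (m + 1) = (-1) ^ (m + 1) := by
  intro m
  induction m with
  | zero => simp [CF.P, D0]
  | succ n ih =>
    have h1 : ((c.P (n + 2) : ℕ) : ℝ) = (c.a n : ℝ) * (c.P (n + 1) : ℝ) + (c.P n : ℝ) := by
      rw [P_rec c n]; push_cast; ring
    rw [h1, D_rec c n]
    have : (((c.a n : ℝ) * (c.P (n + 1) : ℝ) + (c.P n : ℝ)) * D c (n + 1) -
        (c.P (n + 1) : ℝ) * ((c.a n : ℝ) * D c (n + 1) + D c n))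
        = -((c.P (n + 1) : ℝ) * D c n - (c.P n : ℝ) * D c (n + 1)) := by ring
    rw [this, ih]
    ring

lemma sum_one (hα : 1 < α) (hirr : Irrational α) (c : CF α) (m : ℕ) :
    (c.P (m + 1) : ℝ) * |D c m| + (c.P m : ℝ) * |D c (m + 1)| = 1 := by
  have hd := det hα hirr c m
  have hs := D_sign hα hirr c m
  have hs1 := D_sign hα hirr c (m + 1)
  rcases Nat.even_or_odd m with hm | hm
  · have h1 : |D c m| = -(D c m) := abs_of_neg (D_neg_even hα hirr c hm)
    have h2 : |D c (m + 1)| = D c (m + 1) := abs_of_pos (D_pos_odd hα hirr c (Even.add_one hm))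
    have h3 : ((-1 : ℝ)) ^ (m + 1) = -1 := Odd.neg_one_pow (Even.add_one hm)
    rw [h1, h2]
    rw [h3] at hd
    linarith
  · have h1 : |D c m| = D c m := abs_of_pos (D_pos_odd hα hirr c hm)
    have h2 : |D c (m + 1)| = -(D c (m + 1)) := abs_of_neg (D_neg_even hα hirr c (Odd.add_one hm))
    have h3 : ((-1 : ℝ)) ^ (m + 1) = 1 := (Odd.add_one hm).neg_one_pow
    rw [h1, h2]
    rw [h3] at hd
    linarith

lemma abs_add_le (hα : 1 < α) (hirr : Irrational α) (c : CF α) {m : ℕ} (hm : 1 ≤ m) :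
    |D c m| + |D c (m + 1)| ≤ 1 := by
  have h := sum_one hα hirr c m
  obtain ⟨n, rfl⟩ := Nat.exists_eq_add_of_le hm
  have e1 : 1 + n = n + 1 := by omega
  have e2 : 1 + n + 1 = n + 1 + 1 := by omega
  rw [e1] at h ⊢
  have hp1 : (1 : ℝ) ≤ (c.P (n + 1) : ℝ) := by exact_mod_cast P_pos c n
  have hp2 : (1 : ℝ) ≤ (c.P (n + 1 + 1) : ℝ) := by exact_mod_cast P_pos c (n + 1)
  nlinarith [abs_nonneg (D c (n + 1)), abs_nonneg (D c (n + 1 + 1))]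

lemma irr_mul (hirr : Irrational α) {x : ℕ} (hx : 0 < x) : Irrational ((x : ℝ) * α⁻¹) :=
  (hirr.inv).natCast_mul (Nat.pos_iff_ne_zero.mp hx)

lemma Fr_nonneg (x : ℕ) : 0 ≤ Fr α x := Int.fract_nonneg _

lemma Fr_lt_one (x : ℕ) : Fr α x < 1 := Int.fract_lt_one _

lemma Fr_pos (hirr : Irrational α) {x : ℕ} (hx : 0 < x) : 0 < Fr α x := by
  rcases (Int.fract_nonneg ((x : ℝ) * α⁻¹)).lt_or_eq with h | h
  · exact h
  · exfalso
    have hfl := Int.floor_add_fract ((x : ℝ) * α⁻¹)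
    have hz : ((x : ℝ) * α⁻¹) = (⌊(x : ℝ) * α⁻¹⌋ : ℝ) := by linarith
    exact (irr_mul hirr hx).ne_int _ hz

lemma Fr_ne (hirr : Irrational α) {x y : ℕ} (h : x ≠ y) : Fr α x ≠ Fr α y := by
  intro he
  obtain ⟨z, hz⟩ := Int.fract_eq_fract.1 he
  have hxy : ((x : ℤ) - y : ℤ) ≠ 0 := by
    simp only [sub_ne_zero]
    exact_mod_cast h
  have hval : (((x : ℤ) - y : ℤ) : ℝ) * α⁻¹ = (z : ℝ) := by
    push_cast at hz ⊢
    nlinarith [hz]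
  exact ((hirr.inv).intCast_mul hxy).ne_int z hval

lemma Fr_ne_half (hirr : Irrational α) {x : ℕ} (hx : 0 < x) : Fr α x ≠ 1 / 2 := by
  intro h
  have hfl := Int.floor_add_fract ((x : ℝ) * α⁻¹)
  rw [Fr] at h
  have h2 : ((x : ℝ) * α⁻¹) = (((⌊(x : ℝ) * α⁻¹⌋ : ℚ) + 1 / 2 : ℚ) : ℝ) := by
    push_cast
    linarith
  exact (irr_mul hirr hx) ⟨_, h2.symm⟩

lemma fract_natadd (n : ℕ) (x : ℝ) : Int.fract ((n : ℝ) + x) = Int.fract x := by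
  rw [← Int.cast_natCast n, Int.fract_intCast_add]

lemma rep_val (c : CF α) (m k : ℕ) :
    ((c.P m + k * c.P (m + 1) : ℕ) : ℝ) * α⁻¹
      = ((G c m + k * G c (m + 1) : ℕ) : ℝ) + (D c m + (k : ℝ) * D c (m + 1)) := by
  push_cast
  unfold D
  ring

lemma fract_rep_odd (hα : 1 < α) (hirr : Irrational α) (c : CF α) {m k : ℕ}
    (hm : Odd m) (hk : k ≤ c.a m) :
    Fr α (c.P m + k * c.P (m + 1)) = D c m + (k : ℝ) * D c (m + 1) := by
  rw [Fr, rep_val, fract_natadd]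
  have hrec := D_rec c m
  have hneg : D c (m + 1) < 0 := D_neg_even hα hirr c (Odd.add_one hm)
  have hm2 : Odd (m + 2) := by obtain ⟨j, hj⟩ := hm; exact ⟨j + 1, by omega⟩
  have hpos2 : 0 < D c (m + 2) := D_pos_odd hα hirr c hm2
  have hka : (k : ℝ) ≤ (c.a m : ℝ) := by exact_mod_cast hk
  have hmul : (c.a m : ℝ) * D c (m + 1) ≤ (k : ℝ) * D c (m + 1) :=
    mul_le_mul_of_nonpos_right hka hneg.le
  have hkd : (k : ℝ) * D c (m + 1) ≤ 0 :=
    mul_nonpos_of_nonneg_of_nonpos (Nat.cast_nonneg k) hneg.le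
  have hDm : D c m ≤ α⁻¹ := by
    obtain ⟨j, rfl⟩ := hm
    calc D c (2 * j + 1) ≤ |D c (2 * j + 1)| := le_abs_self _
    _ ≤ α⁻¹ := D_abs_le hα hirr c (2 * j)
  have hinv : α⁻¹ < 1 := inv_lt_one_of_one_lt₀ hα
  exact Int.fract_eq_self.2 ⟨by linarith, by linarith⟩

lemma fract_rep_even (hα : 1 < α) (hirr : Irrational α) (c : CF α) {m k : ℕ}
    (hm : Even m) (hk : k ≤ c.a m) (hpos : 0 < c.P m + k * c.P (m + 1)) :
    Fr α (c.P m + k * c.P (m + 1)) = 1 + D c m + (k : ℝ) * D c (m + 1) := by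
  rw [Fr, rep_val, fract_natadd]
  have hrec := D_rec c m
  have hposd : 0 < D c (m + 1) := D_pos_odd hα hirr c (Even.add_one hm)
  have hm2 : Even (m + 2) := by obtain ⟨j, hj⟩ := hm; exact ⟨j + 1, by omega⟩
  have hneg2 : D c (m + 2) < 0 := D_neg_even hα hirr c hm2
  have hka : (k : ℝ) ≤ (c.a m : ℝ) := by exact_mod_cast hk
  have hmul : (k : ℝ) * D c (m + 1) ≤ (c.a m : ℝ) * D c (m + 1) :=
    mul_le_mul_of_nonneg_right hka hposd.le
  have hkd : 0 ≤ (k : ℝ) * D c (m + 1) :=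
    mul_nonneg (Nat.cast_nonneg k) hposd.le
  have hlow : -1 < D c m + (k : ℝ) * D c (m + 1) := by
    rcases Nat.eq_zero_or_pos m with h0 | hmp
    · subst h0
      have hk1 : 1 ≤ k := by
        by_contra hc
        push_neg at hc
        interval_cases k
        · simp [CF.P] at hpos
      have hk1R : (1 : ℝ) ≤ (k : ℝ) := by exact_mod_cast hk1
      have hb : 0 < α⁻¹ := by positivity
      rw [D0, D1]
      nlinarith
    · obtain ⟨n, rfl⟩ : ∃ n, m = n + 1 := ⟨m - 1, by omega⟩
      have : |D c (n + 1)| ≤ α⁻¹ := D_abs_le hα hirr c n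
      have hinv : α⁻¹ < 1 := inv_lt_one_of_one_lt₀ hα
      have := neg_abs_le (D c (n + 1))
      linarith
  have key : Int.fract (D c m + (k : ℝ) * D c (m + 1))
      = Int.fract ((D c m + (k : ℝ) * D c (m + 1)) + ((1 : ℤ) : ℝ)) :=
    (Int.fract_add_intCast _ _).symm
  rw [key]
  push_cast
  rw [Int.fract_eq_self.2 ⟨by linarith, by linarith⟩]
  ring

lemma sum_cases (x y p : ℕ) (h : x + y = p) :
    Fr α p = Fr α x + Fr α y ∨ Fr α p = Fr α x + Fr α y - 1 := by
  have hx := Int.floor_add_fract ((x : ℝ) * α⁻¹)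
  have hy := Int.floor_add_fract ((y : ℝ) * α⁻¹)
  have hd : (p : ℝ) * α⁻¹ = ((⌊(x : ℝ) * α⁻¹⌋ + ⌊(y : ℝ) * α⁻¹⌋ : ℤ) : ℝ) + (Fr α x + Fr α y) := by
    have hp : (p : ℝ) = (x : ℝ) + (y : ℝ) := by exact_mod_cast congrArg (Nat.cast : ℕ → ℝ) h.symm
    rw [hp]
    push_cast
    unfold Fr
    nlinarith [hx, hy]
  have h1 : Fr α p = Int.fract (Fr α x + Fr α y) := by
    rw [Fr, hd, Int.fract_intCast_add]
  have hnn : 0 ≤ Fr α x + Fr α y := add_nonneg (Fr_nonneg x) (Fr_nonneg y)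
  rcases lt_or_ge (Fr α x + Fr α y) 1 with hc | hc
  · left
    rw [h1, Int.fract_eq_self.2 ⟨hnn, hc⟩]
  · right
    have h2 : Fr α x + Fr α y = (Fr α x + Fr α y - 1) + ((1 : ℤ) : ℝ) := by push_cast; ring
    have hlt : Fr α x + Fr α y - 1 < 1 := by
      have := Fr_lt_one (α := α) x
      have := Fr_lt_one (α := α) y
      linarith
    rw [h1, h2, Int.fract_add_intCast, Int.fract_eq_self.2 ⟨by linarith, hlt⟩]
    push_cast
    ring

def Qst (c : CF α) (n : ℕ) : Prop :=
  ∀ y : ℕ, 0 < y → y < c.P (n + 1) →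
    (D c n ≤ Fr α y ∧ D c (n + 1) - D c n ≤ Fr α y) ∧
    (Fr α y ≤ 1 + D c n ∧ Fr α y ≤ 1 + (D c (n + 1) - D c n))

lemma Q0 (c : CF α) : Qst c 0 := by
  intro y hy0 hy
  simp [CF.P] at hy
  omega

lemma Q1 (hα : 1 < α) (hirr : Irrational α) (c : CF α) : Qst c 1 := by
  intro y hy0 hy
  have ha0 : c.P 2 = c.a 0 := by simp [CF.P, c.p0]
  rw [ha0] at hy
  have hb : (0 : ℝ) < α⁻¹ := by positivity
  have hinv : α⁻¹ < 1 := inv_lt_one_of_one_lt₀ hα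
  have hD2 : D c 2 = (c.a 0 : ℝ) * α⁻¹ - 1 := by
    simp [D, G, CF.P, c.p0]
  have hD1 : D c 1 = α⁻¹ := D1 c
  have hD2neg : D c 2 < 0 := D_neg_even hα hirr c (by norm_num)
  have hyR : (y : ℝ) ≤ (c.a 0 : ℝ) - 1 := by
    have : (y : ℝ) + 1 ≤ (c.a 0 : ℝ) := by exact_mod_cast hy
    linarith
  have hy1 : (1 : ℝ) ≤ (y : ℝ) := by exact_mod_cast hy0
  have hlt1 : (y : ℝ) * α⁻¹ < 1 := by nlinarith
  have hF : Fr α y = (y : ℝ) * α⁻¹ :=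
    Int.fract_eq_self.2 ⟨by positivity, hlt1⟩
  rw [hF, hD1, hD2]
  refine ⟨⟨by nlinarith, by nlinarith⟩, ⟨by nlinarith, by nlinarith⟩⟩

lemma Qstep (hα : 1 < α) (hirr : Irrational α) (c : CF α) (n : ℕ)
    (h0 : Qst c n) (h1 : Qst c (n + 1)) : Qst c (n + 2) := by
  intro y hy0 hy
  replace hy : y < c.P (n + 3) := hy
  show (D c (n + 2) ≤ Fr α y ∧ D c (n + 3) - D c (n + 2) ≤ Fr α y) ∧
    (Fr α y ≤ 1 + D c (n + 2) ∧ Fr α y ≤ 1 + (D c (n + 3) - D c (n + 2)))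
  have hBpos : 0 < c.P (n + 2) := P_pos c (n + 1)
  have hyd : c.P (n + 2) * (y / c.P (n + 2)) + y % c.P (n + 2) = y := Nat.div_add_mod y _
  set j := y / c.P (n + 2) with hjdef
  set r := y % c.P (n + 2) with hrdef
  have hr : r < c.P (n + 2) := Nat.mod_lt _ hBpos
  have hPrec : c.P (n + 3) = c.a (n + 1) * c.P (n + 2) + c.P (n + 1) := P_rec c (n + 1)
  have hjA : j ≤ c.a (n + 1) := by
    by_contra hc
    push_neg at hc
    have h1' : c.P (n + 2) * (c.a (n + 1) + 1) ≤ c.P (n + 2) * j := Nat.mul_le_mul_left _ hc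
    have h2' : c.P (n + 1) ≤ c.P (n + 2) := P_mono c (n + 1)
    have hfin : c.P (n + 3) ≤ y := by
      calc c.P (n + 3) = c.a (n + 1) * c.P (n + 2) + c.P (n + 1) := hPrec
      _ ≤ c.a (n + 1) * c.P (n + 2) + c.P (n + 2) := by omega
      _ = c.P (n + 2) * (c.a (n + 1) + 1) := by ring
      _ ≤ c.P (n + 2) * j := h1'
      _ ≤ y := by omega
    omega
  have hjr : j = c.a (n + 1) → r < c.P (n + 1) := by
    intro hje
    by_contra hc
    push_neg at hc
    have heq : c.a (n + 1) * c.P (n + 2) = c.P (n + 2) * j := by rw [hje, Nat.mul_comm]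
    have hfin : c.P (n + 3) ≤ y := by
      calc c.P (n + 3) = c.a (n + 1) * c.P (n + 2) + c.P (n + 1) := hPrec
      _ = c.P (n + 2) * j + c.P (n + 1) := by rw [heq]
      _ ≤ c.P (n + 2) * j + r := by omega
      _ = y := hyd
    omega
  have hydR : (c.P (n + 2) : ℝ) * (j : ℝ) + (r : ℝ) = (y : ℝ) := by exact_mod_cast hyd
  have hjAR : (j : ℝ) ≤ (c.a (n + 1) : ℝ) := by exact_mod_cast hjA
  have hDrec : D c (n + 3) = (c.a (n + 1) : ℝ) * D c (n + 2) + D c (n + 1) := D_rec c (n + 1)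
  have hF7 : |D c (n + 1)| + |D c (n + 2)| ≤ 1 := abs_add_le hα hirr c (by omega)
  have hPb : (c.P (n + 2) : ℝ) * α⁻¹ = (G c (n + 2) : ℝ) + D c (n + 2) := by unfold D; ring
  have habs1 : |D c (n + 1)| ≤ α⁻¹ := D_abs_le hα hirr c n
  have hinv : α⁻¹ < 1 := inv_lt_one_of_one_lt₀ hα
  have habs02 : |D c (n + 2)| < |D c n| :=
    lt_trans (D_abs_lt hα hirr c (n + 1)) (D_abs_lt hα hirr c n)
  rcases Nat.eq_zero_or_pos r with hr0 | hrpos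
  · -- r = 0 : y = j * P (n+2)
    have hj1 : 1 ≤ j := by
      rcases Nat.eq_zero_or_pos j with h | h
      · rw [h, hr0] at hyd; simp at hyd; omega
      · exact h
    have hj1R : (1 : ℝ) ≤ (j : ℝ) := by exact_mod_cast hj1
    have hval : (y : ℝ) * α⁻¹ = ((j * G c (n + 2) : ℕ) : ℝ) + (j : ℝ) * D c (n + 2) := by
      have hyR : (y : ℝ) = (c.P (n + 2) : ℝ) * (j : ℝ) := by
        rw [← hydR, hr0]; push_cast; ring
      rw [hyR]
      push_cast
      linear_combination (j : ℝ) * hPb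
    have hFy : Fr α y = Int.fract ((j : ℝ) * D c (n + 2)) := by
      rw [Fr, hval, fract_natadd]
    rcases Nat.even_or_odd n with hpar | hpar
    · -- n even : D(n+1) > 0, D(n+2) < 0, D(n+3) > 0
      have hs1 : 0 < D c (n + 1) := D_pos_odd hα hirr c (Even.add_one hpar)
      have hs2 : D c (n + 2) < 0 := D_neg_even hα hirr c
        (by obtain ⟨w, hw⟩ := hpar; exact ⟨w + 1, by omega⟩)
      have hs3 : 0 < D c (n + 3) := D_pos_odd hα hirr c
        (by obtain ⟨w, hw⟩ := hpar; exact ⟨w + 1, by omega⟩)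
      have hA1 : |D c (n + 1)| = D c (n + 1) := abs_of_pos hs1
      have hA2 : |D c (n + 2)| = -(D c (n + 2)) := abs_of_neg hs2
      have hF7' : D c (n + 1) - D c (n + 2) ≤ 1 := by rw [hA1, hA2] at hF7; linarith
      have hwlo : (c.a (n + 1) : ℝ) * D c (n + 2) ≤ (j : ℝ) * D c (n + 2) :=
        mul_le_mul_of_nonpos_right hjAR hs2.le
      have hwhi : (j : ℝ) * D c (n + 2) ≤ 1 * D c (n + 2) :=
        mul_le_mul_of_nonpos_right hj1R hs2.le
      have hD1lt : D c (n + 1) < 1 := by rw [hA1] at habs1; linarith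
      have hwgt : -1 < (j : ℝ) * D c (n + 2) := by linarith [hDrec]
      have hFr : Fr α y = (j : ℝ) * D c (n + 2) + 1 := by
        rw [hFy]
        have : Int.fract ((j : ℝ) * D c (n + 2))
            = Int.fract (((j : ℝ) * D c (n + 2) + 1) + ((-1 : ℤ) : ℝ)) := by
          push_cast; ring_nf
        rw [this, Int.fract_add_intCast, Int.fract_eq_self.2 ⟨by linarith, by linarith⟩]
      rw [hFr]
      refine ⟨⟨by linarith, by linarith [hDrec]⟩, ⟨by linarith, by linarith⟩⟩
    · -- n odd : D(n+1) < 0, D(n+2) > 0, D(n+3) < 0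
      have hs1 : D c (n + 1) < 0 := D_neg_even hα hirr c (Odd.add_one hpar)
      have hs2 : 0 < D c (n + 2) := D_pos_odd hα hirr c
        (by obtain ⟨w, hw⟩ := hpar; exact ⟨w + 1, by omega⟩)
      have hs3 : D c (n + 3) < 0 := D_neg_even hα hirr c
        (by obtain ⟨w, hw⟩ := hpar; exact ⟨w + 2, by omega⟩)
      have hA1 : |D c (n + 1)| = -(D c (n + 1)) := abs_of_neg hs1
      have hA2 : |D c (n + 2)| = D c (n + 2) := abs_of_pos hs2
      have hF7' : D c (n + 2) - D c (n + 1) ≤ 1 := by rw [hA1, hA2] at hF7; linarith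
      have hwlo : 1 * D c (n + 2) ≤ (j : ℝ) * D c (n + 2) :=
        mul_le_mul_of_nonneg_right hj1R hs2.le
      have hwhi : (j : ℝ) * D c (n + 2) ≤ (c.a (n + 1) : ℝ) * D c (n + 2) :=
        mul_le_mul_of_nonneg_right hjAR hs2.le
      have hD1lt : -(D c (n + 1)) < 1 := by rw [hA1] at habs1; linarith
      have hwlt1 : (j : ℝ) * D c (n + 2) < 1 := by linarith [hDrec]
      have hFr : Fr α y = (j : ℝ) * D c (n + 2) := by
        rw [hFy, Int.fract_eq_self.2 ⟨by linarith, hwlt1⟩]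
      rw [hFr]
      refine ⟨⟨by linarith, by linarith⟩, ⟨by linarith, by linarith [hDrec]⟩⟩
  · -- r > 0
    have hFrb := h1 r hrpos hr
    obtain ⟨⟨hb1, hb2⟩, hb3, hb4⟩ := hFrb
    replace hb2 : D c (n + 2) - D c (n + 1) ≤ Fr α r := hb2
    replace hb4 : Fr α r ≤ 1 + (D c (n + 2) - D c (n + 1)) := hb4
    have hFrpos : 0 < Fr α r := Fr_pos hirr hrpos
    have hFrlt : Fr α r < 1 := Fr_lt_one r
    have hrb : (r : ℝ) * α⁻¹ = ((⌊(r : ℝ) * α⁻¹⌋ : ℤ) : ℝ) + Fr α r := by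
      rw [Fr]; linarith [Int.floor_add_fract ((r : ℝ) * α⁻¹)]
    have hval : (y : ℝ) * α⁻¹ = ((j * G c (n + 2) : ℕ) : ℝ)
        + (((⌊(r : ℝ) * α⁻¹⌋ : ℤ) : ℝ) + ((j : ℝ) * D c (n + 2) + Fr α r)) := by
      have hyR : (y : ℝ) = (c.P (n + 2) : ℝ) * (j : ℝ) + (r : ℝ) := hydR.symm
      calc (y : ℝ) * α⁻¹ = (j : ℝ) * ((c.P (n + 2) : ℝ) * α⁻¹) + (r : ℝ) * α⁻¹ := by
            rw [hyR]; ring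
      _ = _ := by push_cast; linear_combination (j : ℝ) * hPb + hrb
    have hFy : Fr α y = Int.fract ((j : ℝ) * D c (n + 2) + Fr α r) := by
      rw [Fr, hval, fract_natadd, Int.fract_intCast_add]
    rcases Nat.even_or_odd n with hpar | hpar
    · -- n even
      have hs0 : D c n < 0 := D_neg_even hα hirr c hpar
      have hs1 : 0 < D c (n + 1) := D_pos_odd hα hirr c (Even.add_one hpar)
      have hs2 : D c (n + 2) < 0 := D_neg_even hα hirr c
        (by obtain ⟨w, hw⟩ := hpar; exact ⟨w + 1, by omega⟩)
      have hs3 : 0 < D c (n + 3) := D_pos_odd hα hirr c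
        (by obtain ⟨w, hw⟩ := hpar; exact ⟨w + 1, by omega⟩)
      have h02 : D c n ≤ D c (n + 2) := by
        have h1' : |D c (n + 2)| = -(D c (n + 2)) := abs_of_neg hs2
        have h2' : |D c n| = -(D c n) := abs_of_neg hs0
        rw [h1', h2'] at habs02
        linarith
      have hjlo : (c.a (n + 1) : ℝ) * D c (n + 2) ≤ (j : ℝ) * D c (n + 2) :=
        mul_le_mul_of_nonpos_right hjAR hs2.le
      have hjhi : (j : ℝ) * D c (n + 2) ≤ 0 :=
        mul_nonpos_of_nonneg_of_nonpos (Nat.cast_nonneg j) hs2.le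
      have hwlo : 0 < (j : ℝ) * D c (n + 2) + Fr α r := by linarith [hDrec]
      have hwhi : (j : ℝ) * D c (n + 2) + Fr α r < 1 := by linarith
      have hFr : Fr α y = (j : ℝ) * D c (n + 2) + Fr α r := by
        rw [hFy, Int.fract_eq_self.2 ⟨hwlo.le, hwhi⟩]
      have hg2 : D c (n + 3) - D c (n + 2) ≤ (j : ℝ) * D c (n + 2) + Fr α r := by
        rcases lt_or_eq_of_le hjA with hjlt | hjeq
        · have hjR : (j : ℝ) ≤ (c.a (n + 1) : ℝ) - 1 := by
            have : (j : ℝ) + 1 ≤ (c.a (n + 1) : ℝ) := by exact_mod_cast hjlt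
            linarith
          have : ((c.a (n + 1) : ℝ) - 1) * D c (n + 2) ≤ (j : ℝ) * D c (n + 2) :=
            mul_le_mul_of_nonpos_right hjR hs2.le
          linarith [hDrec]
        · have hrlt := hjr hjeq
          have hbb := h0 r hrpos hrlt
          have hjR : (j : ℝ) = (c.a (n + 1) : ℝ) := by exact_mod_cast hjeq
          rw [hjR]
          linarith [hDrec, hbb.1.2]
      rw [hFr]
      refine ⟨⟨by linarith, hg2⟩, ⟨by linarith, by linarith⟩⟩
    · -- n odd
      have hs0 : 0 < D c n := D_pos_odd hα hirr c hpar
      have hs1 : D c (n + 1) < 0 := D_neg_even hα hirr c (Odd.add_one hpar)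
      have hs2 : 0 < D c (n + 2) := D_pos_odd hα hirr c
        (by obtain ⟨w, hw⟩ := hpar; exact ⟨w + 1, by omega⟩)
      have hs3 : D c (n + 3) < 0 := D_neg_even hα hirr c
        (by obtain ⟨w, hw⟩ := hpar; exact ⟨w + 2, by omega⟩)
      have h02 : D c (n + 2) ≤ D c n := by
        have h1' : |D c (n + 2)| = D c (n + 2) := abs_of_pos hs2
        have h2' : |D c n| = D c n := abs_of_pos hs0
        rw [h1', h2'] at habs02
        linarith
      have hjlo : 0 ≤ (j : ℝ) * D c (n + 2) :=
        mul_nonneg (Nat.cast_nonneg j) hs2.le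
      have hjhi : (j : ℝ) * D c (n + 2) ≤ (c.a (n + 1) : ℝ) * D c (n + 2) :=
        mul_le_mul_of_nonneg_right hjAR hs2.le
      have hwlo : 0 < (j : ℝ) * D c (n + 2) + Fr α r := by linarith
      have hwhi : (j : ℝ) * D c (n + 2) + Fr α r ≤ 1 + (D c (n + 3) - D c (n + 2)) := by
        rcases lt_or_eq_of_le hjA with hjlt | hjeq
        · have hjR : (j : ℝ) ≤ (c.a (n + 1) : ℝ) - 1 := by
            have : (j : ℝ) + 1 ≤ (c.a (n + 1) : ℝ) := by exact_mod_cast hjlt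
            linarith
          have : (j : ℝ) * D c (n + 2) ≤ ((c.a (n + 1) : ℝ) - 1) * D c (n + 2) :=
            mul_le_mul_of_nonneg_right hjR hs2.le
          linarith [hDrec]
        · have hrlt := hjr hjeq
          have hbb := h0 r hrpos hrlt
          have hjR : (j : ℝ) = (c.a (n + 1) : ℝ) := by exact_mod_cast hjeq
          rw [hjR]
          linarith [hDrec, hbb.2.2]
      have hwlt1 : (j : ℝ) * D c (n + 2) + Fr α r < 1 := by linarith
      have hFr : Fr α y = (j : ℝ) * D c (n + 2) + Fr α r := by
        rw [hFy, Int.fract_eq_self.2 ⟨hwlo.le, hwlt1⟩]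
      have hg1 : D c (n + 2) ≤ (j : ℝ) * D c (n + 2) + Fr α r := by
        rcases Nat.eq_zero_or_pos j with hj0 | hj1
        · have : (j : ℝ) = 0 := by exact_mod_cast hj0
          rw [this]
          linarith
        · have hj1R : (1 : ℝ) ≤ (j : ℝ) := by exact_mod_cast hj1
          have : 1 * D c (n + 2) ≤ (j : ℝ) * D c (n + 2) :=
            mul_le_mul_of_nonneg_right hj1R hs2.le
          linarith
      rw [hFr]
      exact ⟨⟨hg1, by linarith⟩, ⟨by linarith, hwhi⟩⟩

lemma Qall (hα : 1 < α) (hirr : Irrational α) (c : CF α) : ∀ n, Qst c n := by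
  have key : ∀ n, Qst c n ∧ Qst c (n + 1) := by
    intro n
    induction n with
    | zero => exact ⟨Q0 c, Q1 hα hirr c⟩
    | succ m ih => exact ⟨ih.2, Qstep hα hirr c m ih.1 ih.2⟩
  exact fun n => (key n).1

lemma record_min (hα : 1 < α) (hirr : Irrational α) (c : CF α) :
    ∀ p : ℕ, 0 < p → (∀ x : ℕ, 0 < x → x < p → Fr α p < Fr α x) →
    ∃ m k, Odd m ∧ k < c.a m ∧ p = c.P m + k * c.P (m + 1) := by
  intro p
  induction p using Nat.strong_induction_on with
  | _ p ih =>
    intro hp hrec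
    rcases eq_or_lt_of_le (Nat.one_le_iff_ne_zero.2 (Nat.pos_iff_ne_zero.1 hp)) with h1 | h1
    · refine ⟨1, 0, odd_one, c.ha 1, ?_⟩
      simp [CF.P, ← h1]
    · obtain ⟨x₀, hx₀mem, hx₀min⟩ :=
        Finset.exists_min_image (Finset.Ioo 0 p) (Fr α) ⟨1, Finset.mem_Ioo.2 ⟨one_pos, h1⟩⟩
      rw [Finset.mem_Ioo] at hx₀mem
      obtain ⟨hx₀pos, hx₀lt⟩ := hx₀mem
      have hx₀rec : ∀ x : ℕ, 0 < x → x < x₀ → Fr α x₀ < Fr α x := by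
        intro x hx hxx
        have hle := hx₀min x (Finset.mem_Ioo.2 ⟨hx, lt_trans hxx hx₀lt⟩)
        rcases lt_or_eq_of_le hle with h | h
        · exact h
        · exact absurd h (Fr_ne hirr (show x₀ ≠ x by omega))
      obtain ⟨m, k, hmo, hk, hx₀e⟩ := ih x₀ hx₀lt hx₀pos hx₀rec
      have hm1 : 1 ≤ m := by obtain ⟨j, hj⟩ := hmo; omega
      have hPm : 0 < c.P m := by
        obtain ⟨mm, hmm⟩ : ∃ mm, m = mm + 1 := ⟨m - 1, by omega⟩
        rw [hmm]; exact P_pos c mm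
      have hPm1pos : 0 < c.P (m + 1) := P_pos c m
      have hs2 : D c (m + 1) < 0 := D_neg_even hα hirr c (Odd.add_one hmo)
      have hFx₀ : Fr α x₀ = D c m + (k : ℝ) * D c (m + 1) := by
        rw [hx₀e]; exact fract_rep_odd hα hirr c hmo hk.le
      have hze : x₀ + c.P (m + 1) = c.P m + (k + 1) * c.P (m + 1) := by rw [hx₀e]; ring
      have hcast : ((k + 1 : ℕ) : ℝ) = (k : ℝ) + 1 := by push_cast; ring
      have hFz : Fr α (x₀ + c.P (m + 1)) = D c m + ((k : ℝ) + 1) * D c (m + 1) := by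
        rw [hze, fract_rep_odd hα hirr c hmo (show k + 1 ≤ c.a m by omega), hcast]
      have hzlt : Fr α (x₀ + c.P (m + 1)) < Fr α x₀ := by
        rw [hFz, hFx₀]; nlinarith
      have hle : p ≤ x₀ + c.P (m + 1) := by
        by_contra hc
        push_neg at hc
        have := hx₀min (x₀ + c.P (m + 1)) (Finset.mem_Ioo.2 ⟨by omega, hc⟩)
        linarith
      have hge : x₀ + c.P (m + 1) ≤ p := by
        by_contra hc
        push_neg at hc
        have hyy0 : 0 < p - x₀ := by omega
        have hyyP : p - x₀ < c.P (m + 1) := by omega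
        have hsum : x₀ + (p - x₀) = p := by omega
        have hQ := Qall hα hirr c m (p - x₀) hyy0 hyyP
        have hFylo : D c m ≤ Fr α (p - x₀) := hQ.1.1
        have hFyhi : Fr α (p - x₀) ≤ 1 + (D c (m + 1) - D c m) := hQ.2.2
        have hFypos : 0 < Fr α (p - x₀) := Fr_pos hirr hyy0
        have hkd : (k : ℝ) * D c (m + 1) ≤ 0 :=
          mul_nonpos_of_nonneg_of_nonpos (Nat.cast_nonneg k) hs2.le
        rcases sum_cases x₀ (p - x₀) p hsum with hcase | hcase
        · have := hrec x₀ hx₀pos hx₀lt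
          linarith
        · have := Fr_nonneg (α := α) p
          linarith
      have hpz : p = c.P m + (k + 1) * c.P (m + 1) := by omega
      rcases lt_or_eq_of_le (show k + 1 ≤ c.a m by omega) with hlt | heq
      · exact ⟨m, k + 1, hmo, hlt, hpz⟩
      · refine ⟨m + 2, 0, ?_, c.ha (m + 2), ?_⟩
        · obtain ⟨j, hj⟩ := hmo; exact ⟨j + 1, by omega⟩
        · calc p = c.P m + (k + 1) * c.P (m + 1) := hpz
          _ = c.a m * c.P (m + 1) + c.P m := by rw [heq]; ring
          _ = c.P (m + 2) := (P_rec c m).symm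
          _ = c.P (m + 2) + 0 * c.P (m + 2 + 1) := by ring

lemma record_max (hα : 1 < α) (hirr : Irrational α) (c : CF α) :
    ∀ p : ℕ, 0 < p → (∀ x : ℕ, 0 < x → x < p → Fr α x < Fr α p) →
    ∃ m k, Even m ∧ k < c.a m ∧ p = c.P m + k * c.P (m + 1) := by
  intro p
  induction p using Nat.strong_induction_on with
  | _ p ih =>
    intro hp hrec
    rcases eq_or_lt_of_le (Nat.one_le_iff_ne_zero.2 (Nat.pos_iff_ne_zero.1 hp)) with h1 | h1
    · rcases lt_or_eq_of_le (c.ha 0) with ha0 | ha0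
      · refine ⟨0, 1, Even.zero, ha0, ?_⟩
        simp [CF.P, ← h1]
      · refine ⟨2, 0, (by norm_num : Even 2), c.ha 2, ?_⟩
        simp [CF.P, c.p0, ← h1, ← ha0]
    · obtain ⟨x₀, hx₀mem, hx₀min⟩ :=
        Finset.exists_max_image (Finset.Ioo 0 p) (Fr α) ⟨1, Finset.mem_Ioo.2 ⟨one_pos, h1⟩⟩
      rw [Finset.mem_Ioo] at hx₀mem
      obtain ⟨hx₀pos, hx₀lt⟩ := hx₀mem
      have hx₀rec : ∀ x : ℕ, 0 < x → x < x₀ → Fr α x < Fr α x₀ := by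
        intro x hx hxx
        have hle := hx₀min x (Finset.mem_Ioo.2 ⟨hx, lt_trans hxx hx₀lt⟩)
        rcases lt_or_eq_of_le hle with h | h
        · exact h
        · exact absurd h (Fr_ne hirr (show x ≠ x₀ by omega))
      obtain ⟨m, k, hme, hk, hx₀e⟩ := ih x₀ hx₀lt hx₀pos hx₀rec
      have hPm1pos : 0 < c.P (m + 1) := P_pos c m
      have hs2 : 0 < D c (m + 1) := D_pos_odd hα hirr c (Even.add_one hme)
      have hFx₀ : Fr α x₀ = 1 + D c m + (k : ℝ) * D c (m + 1) := by
        rw [hx₀e]; exact fract_rep_even hα hirr c hme hk.le (hx₀e ▸ hx₀pos)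
      have hze : x₀ + c.P (m + 1) = c.P m + (k + 1) * c.P (m + 1) := by rw [hx₀e]; ring
      have hcast : ((k + 1 : ℕ) : ℝ) = (k : ℝ) + 1 := by push_cast; ring
      have hFz : Fr α (x₀ + c.P (m + 1)) = 1 + D c m + ((k : ℝ) + 1) * D c (m + 1) := by
        rw [hze, fract_rep_even hα hirr c hme (show k + 1 ≤ c.a m by omega)
          (by positivity), hcast]
      have hzgt : Fr α x₀ < Fr α (x₀ + c.P (m + 1)) := by
        rw [hFz, hFx₀]; nlinarith
      have hle : p ≤ x₀ + c.P (m + 1) := by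
        by_contra hc
        push_neg at hc
        have := hx₀min (x₀ + c.P (m + 1)) (Finset.mem_Ioo.2 ⟨by omega, hc⟩)
        linarith
      have hge : x₀ + c.P (m + 1) ≤ p := by
        by_contra hc
        push_neg at hc
        have hyy0 : 0 < p - x₀ := by omega
        have hyyP : p - x₀ < c.P (m + 1) := by omega
        have hsum : x₀ + (p - x₀) = p := by omega
        have hQ := Qall hα hirr c m (p - x₀) hyy0 hyyP
        have hFylo : D c (m + 1) - D c m ≤ Fr α (p - x₀) := hQ.1.2
        have hFylt : Fr α (p - x₀) < 1 := Fr_lt_one _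
        have hkd : 0 ≤ (k : ℝ) * D c (m + 1) :=
          mul_nonneg (Nat.cast_nonneg k) hs2.le
        rcases sum_cases x₀ (p - x₀) p hsum with hcase | hcase
        · have := Fr_lt_one (α := α) p
          linarith
        · have := hrec x₀ hx₀pos hx₀lt
          linarith
      have hpz : p = c.P m + (k + 1) * c.P (m + 1) := by omega
      rcases lt_or_eq_of_le (show k + 1 ≤ c.a m by omega) with hlt | heq
      · exact ⟨m, k + 1, hme, hlt, hpz⟩
      · refine ⟨m + 2, 0, ?_, c.ha (m + 2), ?_⟩
        · obtain ⟨j, hj⟩ := hme; exact ⟨j + 1, by omega⟩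
        · calc p = c.P m + (k + 1) * c.P (m + 1) := hpz
          _ = c.a m * c.P (m + 1) + c.P m := by rw [heq]; ring
          _ = c.P (m + 2) := (P_rec c m).symm
          _ = c.P (m + 2) + 0 * c.P (m + 2 + 1) := by ring

lemma round_ge {v : ℝ} (h : 1 / 2 ≤ Int.fract v) : (⌊v⌋ : ℤ) + 1 ≤ round v := by
  rw [round_eq]
  apply Int.le_floor.2
  have := Int.floor_add_fract v
  push_cast
  linarith

lemma round_le {v : ℝ} (h : Int.fract v < 1 / 2) : round v ≤ (⌊v⌋ : ℤ) := by
  rw [round_eq]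
  have h2 : ⌊v + 1 / 2⌋ < ⌊v⌋ + 1 := by
    apply Int.floor_lt.2
    have := Int.floor_add_fract v
    push_cast
    linarith
  omega

lemma E_form (hα : 1 < α) (x : ℕ) :
    E α x = ((x : ℝ) * α⁻¹ - (round ((x : ℝ) * α⁻¹) : ℝ)) * α := by
  have hαne : α ≠ 0 := by linarith
  rw [E, div_eq_mul_inv]
  field_simp

lemma mem_B (hα : 1 < α) (hirr : Irrational α) {x : ℕ} (hx : 0 < x)
    (h : Fr α x < 1 / 2) : x ∈ Bset α := by
  refine ⟨hx, ?_⟩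
  rw [E_form hα x]
  have hround : round ((x : ℝ) * α⁻¹) ≤ ⌊(x : ℝ) * α⁻¹⌋ := round_le h
  have hroundR : (round ((x : ℝ) * α⁻¹) : ℝ) ≤ (⌊(x : ℝ) * α⁻¹⌋ : ℝ) := by exact_mod_cast hround
  have hfr : 0 < Fr α x := Fr_pos hirr hx
  have hfl := Int.floor_add_fract ((x : ℝ) * α⁻¹)
  rw [Fr] at hfr
  have : 0 < (x : ℝ) * α⁻¹ - (round ((x : ℝ) * α⁻¹) : ℝ) := by linarith
  have hαpos : (0 : ℝ) < α := by linarith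
  positivity

lemma mem_A (hα : 1 < α) (hirr : Irrational α) {x : ℕ} (hx : 0 < x)
    (h : 1 / 2 < Fr α x) : x ∈ Aset α := by
  refine ⟨hx, ?_⟩
  rw [E_form hα x]
  have hround : (⌊(x : ℝ) * α⁻¹⌋ : ℤ) + 1 ≤ round ((x : ℝ) * α⁻¹) := round_ge (by rw [← Fr]; linarith)
  have hroundR : (⌊(x : ℝ) * α⁻¹⌋ : ℝ) + 1 ≤ (round ((x : ℝ) * α⁻¹) : ℝ) := by exact_mod_cast hround
  have hfr : Fr α x < 1 := Fr_lt_one x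
  have hfl := Int.floor_add_fract ((x : ℝ) * α⁻¹)
  rw [Fr] at hfr
  have hneg : (x : ℝ) * α⁻¹ - (round ((x : ℝ) * α⁻¹) : ℝ) < 0 := by linarith
  have hαpos : (0 : ℝ) < α := by linarith
  exact mul_neg_of_neg_of_pos hneg hαpos

end Stmt9Aux

/- Every element of `S_α` is a convergent numerator, twice a convergent
numerator, or the numerator `p_{n-1} + k * p_n` (`0 < k < a_{n+1}`) of an
intermediate fraction; in extended indexing, intermediate numerators are
`c.P m + k * c.P (m+1)` with `0 < k < c.a m`. -/
open Stmt9Aux in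
/-- Every element of `S_α` is a convergent numerator, twice a convergent
numerator, or the numerator `p_{n-1} + k * p_n` (`0 < k < a_{n+1}`) of an
intermediate fraction; in extended indexing, intermediate numerators are
`c.P m + k * c.P (m+1)` with `0 < k < c.a m`. -/
theorem stmt9 (α : ℝ) (hα : 1 < α) (hirr : Irrational α) (c : CF α)
    (p : ℕ) (hp : p ∈ Sset α) :
    (∃ n, p = c.p n) ∨ (∃ n, p = 2 * c.p n) ∨
    (∃ m k, 0 < k ∧ k < c.a m ∧ p = c.P m + k * c.P (m + 1)) := by
  classical
  obtain ⟨hppos, hA, hB⟩ := hp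
  by_cases hp1 : p = 1
  · subst hp1
    rcases lt_or_eq_of_le (c.ha 0) with h | h
    · exact Or.inr (Or.inr ⟨0, 1, one_pos, h, by simp [CF.P]⟩)
    · exact Or.inl ⟨0, by rw [c.p0, ← h]⟩
  by_cases hp2 : p = 2
  · subst hp2
    rcases lt_or_eq_of_le (c.ha 0) with h | h
    · rcases lt_or_eq_of_le (show 2 ≤ c.a 0 by omega) with h2 | h2
      · exact Or.inr (Or.inr ⟨0, 2, two_pos, h2, by simp [CF.P]⟩)
      · exact Or.inl ⟨0, by rw [c.p0, ← h2]⟩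
    · exact Or.inr (Or.inl ⟨0, by rw [c.p0, ← h]⟩)
  have hp3 : 3 ≤ p := by omega
  have hS : ∀ x y : ℕ, 0 < x → 0 < y → x ≠ y → x + y = p →
      ¬(Fr α x < 1 / 2 ∧ Fr α y < 1 / 2) ∧ ¬(1 / 2 < Fr α x ∧ 1 / 2 < Fr α y) := by
    intro x y hx hy hxy hsum
    constructor
    · rintro ⟨h1, h2⟩
      exact hB x (mem_B hα hirr hx h1) y (mem_B hα hirr hy h2) hxy hsum
    · rintro ⟨h1, h2⟩
      exact hA x (mem_A hα hirr hx h1) y (mem_A hα hirr hy h2) hxy hsum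
  have hθne : Fr α p ≠ 1 / 2 := Fr_ne_half hirr hppos
  rcases lt_or_gt_of_ne hθne with hθ | hθ
  · -- θ < 1/2
    have Cmin : ∀ x : ℕ, 0 < x → x < p → 2 * x ≠ p → Fr α p < Fr α x := by
      intro x hx hxp h2x
      by_contra hc
      push_neg at hc
      have hne : Fr α x ≠ Fr α p := Fr_ne hirr (by omega)
      have hlt : Fr α x < Fr α p := lt_of_le_of_ne hc hne
      have hy : 0 < p - x := by omega
      have hsum : x + (p - x) = p := by omega
      rcases sum_cases x (p - x) p hsum with hcase | hcase
      · have h1 : Fr α (p - x) < 1 / 2 := by linarith [Fr_pos hirr hx]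
        exact (hS x (p - x) hx hy (by omega) hsum).1 ⟨by linarith, h1⟩
      · have := Fr_lt_one (α := α) (p - x)
        linarith
    by_cases hall : ∀ x : ℕ, 0 < x → x < p → Fr α p < Fr α x
    · obtain ⟨m, k, hmo, hk, hpe⟩ := record_min hα hirr c p hppos hall
      rcases Nat.eq_zero_or_pos k with hk0 | hkpos
      · subst hk0
        simp only [Nat.zero_mul, Nat.add_zero] at hpe
        rcases m with _ | (_ | mm)
        · exfalso; simp [CF.P] at hpe; omega
        · exfalso; apply hp1; simpa [CF.P] using hpe
        · exact Or.inl ⟨mm, hpe⟩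
      · exact Or.inr (Or.inr ⟨m, k, hkpos, hk, hpe⟩)
    · push_neg at hall
      obtain ⟨s, hs0, hsp, hFs⟩ := hall
      have hFsne : Fr α s ≠ Fr α p := Fr_ne hirr (by omega)
      have hFslt : Fr α s < Fr α p := lt_of_le_of_ne hFs hFsne
      have h2s : 2 * s = p := by
        by_contra hc
        exact absurd (Cmin s hs0 hsp hc) (by linarith)
      have hsrec : ∀ x : ℕ, 0 < x → x < s → Fr α s < Fr α x := by
        intro x hx hxs
        have : Fr α p < Fr α x := Cmin x hx (by omega) (by omega)
        linarith
      obtain ⟨m, k, hmo, hk, hse⟩ := record_min hα hirr c s hs0 hsrec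
      rcases Nat.eq_zero_or_pos k with hk0 | hkpos
      · subst hk0
        simp only [Nat.zero_mul, Nat.add_zero] at hse
        rcases m with _ | (_ | mm)
        · exfalso; simp [CF.P] at hse; omega
        · exfalso; apply hp2; have : s = 1 := by simpa [CF.P] using hse
          omega
        · exact Or.inr (Or.inl ⟨mm, by rw [← h2s, hse]; rfl⟩)
      · exfalso
        have hm1 : 1 ≤ m := by obtain ⟨j, hj⟩ := hmo; omega
        have hPm : 0 < c.P m := by
          obtain ⟨mm, hmm⟩ : ∃ mm, m = mm + 1 := ⟨m - 1, by omega⟩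
          rw [hmm]; exact P_pos c mm
        have hPm1 : 0 < c.P (m + 1) := P_pos c m
        have hs2 : D c (m + 1) < 0 := D_neg_even hα hirr c (Odd.add_one hmo)
        have hFse : Fr α s = D c m + (k : ℝ) * D c (m + 1) := by
          rw [hse]; exact fract_rep_odd hα hirr c hmo hk.le
        have hze : s + c.P (m + 1) = c.P m + (k + 1) * c.P (m + 1) := by rw [hse]; ring
        have hcast : ((k + 1 : ℕ) : ℝ) = (k : ℝ) + 1 := by push_cast; ring
        have hFx : Fr α (s + c.P (m + 1)) = D c m + ((k : ℝ) + 1) * D c (m + 1) := by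
          rw [hze, fract_rep_odd hα hirr c hmo (by omega), hcast]
        have hPlt : c.P (m + 1) < s := by
          rw [hse]
          have h1 : 1 * c.P (m + 1) ≤ k * c.P (m + 1) := Nat.mul_le_mul_right _ hkpos
          omega
        have hxlt : s + c.P (m + 1) < p := by omega
        have h2x : 2 * (s + c.P (m + 1)) ≠ p := by omega
        have hcm := Cmin (s + c.P (m + 1)) (by omega) hxlt h2x
        rw [hFx] at hcm
        rw [hFse] at hFslt
        nlinarith
  · -- θ > 1/2
    have Cmax : ∀ x : ℕ, 0 < x → x < p → 2 * x ≠ p → Fr α x < Fr α p := by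
      intro x hx hxp h2x
      by_contra hc
      push_neg at hc
      have hne : Fr α p ≠ Fr α x := Fr_ne hirr (by omega)
      have hlt : Fr α p < Fr α x := lt_of_le_of_ne hc hne
      have hy : 0 < p - x := by omega
      have hsum : x + (p - x) = p := by omega
      rcases sum_cases x (p - x) p hsum with hcase | hcase
      · linarith [Fr_pos hirr hy]
      · have h1 : 1 / 2 < Fr α (p - x) := by linarith [Fr_lt_one (α := α) x]
        exact (hS x (p - x) hx hy (by omega) hsum).2 ⟨by linarith, h1⟩
    by_cases hall : ∀ x : ℕ, 0 < x → x < p → Fr α x < Fr α p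
    · obtain ⟨m, k, hme, hk, hpe⟩ := record_max hα hirr c p hppos hall
      rcases Nat.eq_zero_or_pos k with hk0 | hkpos
      · subst hk0
        simp only [Nat.zero_mul, Nat.add_zero] at hpe
        rcases m with _ | (_ | mm)
        · exfalso; simp [CF.P] at hpe; omega
        · exfalso; apply hp1; simpa [CF.P] using hpe
        · exact Or.inl ⟨mm, hpe⟩
      · exact Or.inr (Or.inr ⟨m, k, hkpos, hk, hpe⟩)
    · push_neg at hall
      obtain ⟨s, hs0, hsp, hFs⟩ := hall
      have hFsne : Fr α p ≠ Fr α s := Fr_ne hirr (by omega)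
      have hFsgt : Fr α p < Fr α s := lt_of_le_of_ne hFs hFsne
      have h2s : 2 * s = p := by
        by_contra hc
        exact absurd (Cmax s hs0 hsp hc) (by linarith)
      have hsrec : ∀ x : ℕ, 0 < x → x < s → Fr α x < Fr α s := by
        intro x hx hxs
        have : Fr α x < Fr α p := Cmax x hx (by omega) (by omega)
        linarith
      obtain ⟨m, k, hme, hk, hse⟩ := record_max hα hirr c s hs0 hsrec
      rcases Nat.eq_zero_or_pos k with hk0 | hkpos
      · subst hk0
        simp only [Nat.zero_mul, Nat.add_zero] at hse
        rcases m with _ | (_ | mm)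
        · exfalso; simp [CF.P] at hse; omega
        · exfalso; apply hp2; have : s = 1 := by simpa [CF.P] using hse
          omega
        · exact Or.inr (Or.inl ⟨mm, by rw [← h2s, hse]; rfl⟩)
      · exfalso
        have hPm1 : 0 < c.P (m + 1) := P_pos c m
        have hs2 : 0 < D c (m + 1) := D_pos_odd hα hirr c (Even.add_one hme)
        have hFse : Fr α s = 1 + D c m + (k : ℝ) * D c (m + 1) := by
          rw [hse]; exact fract_rep_even hα hirr c hme hk.le (hse ▸ hs0)
        have hze : s + c.P (m + 1) = c.P m + (k + 1) * c.P (m + 1) := by rw [hse]; ring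
        have hcast : ((k + 1 : ℕ) : ℝ) = (k : ℝ) + 1 := by push_cast; ring
        have hFx : Fr α (s + c.P (m + 1)) = 1 + D c m + ((k : ℝ) + 1) * D c (m + 1) := by
          rw [hze, fract_rep_even hα hirr c hme (by omega)
            (Nat.add_pos_right _ (Nat.mul_pos (Nat.succ_pos k) hPm1)), hcast]
        have hPlt : c.P (m + 1) < s := by
          rcases m with _ | mm
          · have hsk : s = k := by simpa [CF.P] using hse
            have : 2 ≤ s := by omega
            simpa [CF.P] using (by omega : 1 < s)
          · have hPm : 0 < c.P (mm + 1) := P_pos c mm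
            rw [hse]
            have h1 : 1 * c.P (mm + 1 + 1) ≤ k * c.P (mm + 1 + 1) := Nat.mul_le_mul_right _ hkpos
            omega
        have hxlt : s + c.P (m + 1) < p := by omega
        have h2x : 2 * (s + c.P (m + 1)) ≠ p := by omega
        have hcm := Cmax (s + c.P (m + 1)) (by omega) hxlt h2x
        rw [hFx] at hcm
        rw [hFse] at hFsgt
        nlinarith
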